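/- Let $X$ be a finite quandle containing a subquandle $Y$ with more than one element such that $|Y|$ is invertible in the coefficient ring $\mathbf{k}$. Then the quandle ring $\mathbf{k}[X]$ has a non-trivial idempotent; specifically, $u = \frac{1}{|Y|} \sum_{y \in Y} e_y$ satisfies $u^2 = u$ and $u \neq e_x$ for all $x \in X$. -/

import Mathlib

/-- A quandle with the paper's (right-multiplication) convention:
`x * y = S_y(x)`, each `S_y` is an automorphism of the quandle fixing `y`. -/
class Quandle' (Q : Type*) extends Mul Q where
  invMul : Q → Q → Q
  rightDist : ∀ x y z : Q, (x * y) * z = (x * z) * (y * z)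
  invMul_mul : ∀ x y : Q, invMul (x * y) y = x
  mul_invMul : ∀ x y : Q, (invMul x y) * y = x
  mul_self : ∀ x : Q, x * x = x

/-- A finite quandle with a subquandle `Y` of size ≥ 2 whose cardinality is invertible in `k`
has the non-trivial idempotent `(1/|Y|) ∑_{y ∈ Y} e_y`. -/
theorem stmt3 {Q : Type*} [Quandle' Q] [Fintype Q] (k : Type*) [CommRing k] [IsDomain k]
    (Y : Finset Q) (hsub : ∀ a ∈ Y, ∀ b ∈ Y, a * b ∈ Y) (hcard : 2 ≤ Y.card)
    (c : k) (hc : (Y.card : k) * c = 1) :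
    (∑ y ∈ Y, c • (MonoidAlgebra.single y (1 : k) : MonoidAlgebra k Q)) *
        (∑ y ∈ Y, c • (MonoidAlgebra.single y (1 : k) : MonoidAlgebra k Q)) =
      ∑ y ∈ Y, c • (MonoidAlgebra.single y (1 : k) : MonoidAlgebra k Q) ∧
    ∀ x : Q, (∑ y ∈ Y, c • (MonoidAlgebra.single y (1 : k) : MonoidAlgebra k Q)) ≠
      MonoidAlgebra.single x (1 : k) := by
  classical
  have hinj : ∀ z : Q, Function.Injective (fun y : Q => y * z) := by
    intro z a b h
    have h2 := congrArg (fun t => Quandle'.invMul t z) h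
    simpa [Quandle'.invMul_mul] using h2
  have himg : ∀ z ∈ Y, Y.image (fun y => y * z) = Y := by
    intro z hz
    apply Finset.eq_of_subset_of_card_le
    · intro w hw
      obtain ⟨y, hy, rfl⟩ := Finset.mem_image.mp hw
      exact hsub y hy z hz
    · rw [Finset.card_image_of_injective _ (hinj z)]
  have hc0 : c ≠ 0 := by
    intro h
    rw [h, mul_zero] at hc
    exact zero_ne_one hc
  constructor
  · rw [Finset.sum_mul_sum]
    have step1 : ∀ y ∈ Y, ∀ z ∈ Y,
        (c • (MonoidAlgebra.single y (1 : k) : MonoidAlgebra k Q)) *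
          (c • MonoidAlgebra.single z (1 : k)) =
        (c * c) • MonoidAlgebra.single (y * z) (1 : k) := by
      intro y _ z _
      rw [smul_mul_smul_comm, MonoidAlgebra.single_mul_single, one_mul]
    calc ∑ y ∈ Y, ∑ z ∈ Y, (c • (MonoidAlgebra.single y (1 : k) : MonoidAlgebra k Q)) *
          (c • MonoidAlgebra.single z (1 : k))
        = ∑ z ∈ Y, ∑ y ∈ Y, (c * c) • (MonoidAlgebra.single (y * z) (1 : k) : MonoidAlgebra k Q) := by
          rw [Finset.sum_comm]
          exact Finset.sum_congr rfl fun z hz => Finset.sum_congr rfl fun y hy => step1 y hy z hz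
      _ = ∑ z ∈ Y, ∑ y ∈ Y, (c * c) • (MonoidAlgebra.single y (1 : k) : MonoidAlgebra k Q) := by
          refine Finset.sum_congr rfl fun z hz => ?_
          conv_rhs => rw [← himg z hz]
          rw [Finset.sum_image (fun a _ b _ h => hinj z h)]
      _ = Y.card • ∑ y ∈ Y, (c * c) • (MonoidAlgebra.single y (1 : k) : MonoidAlgebra k Q) := by
          rw [Finset.sum_const]
      _ = ∑ y ∈ Y, c • (MonoidAlgebra.single y (1 : k) : MonoidAlgebra k Q) := by
          rw [Finset.smul_sum]
          refine Finset.sum_congr rfl fun y _ => ?_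
          rw [← Nat.cast_smul_eq_nsmul k, smul_smul, ← mul_assoc, hc, one_mul]
  · intro x hx
    obtain ⟨a, ha, b, hb, hab⟩ := Finset.one_lt_card.mp (by omega : 1 < Y.card)
    have key : ∀ y0 ∈ Y, y0 ≠ x → False := by
      intro y0 hy0 hne
      have h : (∑ y ∈ Y, c • MonoidAlgebra.single y (1 : k) : MonoidAlgebra k Q).coeff y0 =
          (MonoidAlgebra.single x (1 : k) : MonoidAlgebra k Q).coeff y0 :=
        congrArg (fun f : MonoidAlgebra k Q => f.coeff y0) hx
      rw [MonoidAlgebra.coeff_sum, Finset.sum_apply'] at h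
      simp only [MonoidAlgebra.coeff_smul, MonoidAlgebra.coeff_single, Finsupp.smul_single', mul_one, Finsupp.single_apply] at h
      rw [Finset.sum_ite_eq' Y y0 (fun _ => c), if_pos hy0,
        if_neg (fun hh => hne hh.symm)] at h
      exact hc0 h
    rcases eq_or_ne a x with rfl | hax
    · exact key b hb fun h => hab h.symm
    · exact key a ha hax
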